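/- Let H be a complex Hilbert space and let (v_i)_{i∈I} and (w_i)_{i∈I} be families of bounded operators on H with finite row norm and finite column norm respectively. Suppose that for every bounded operator a on H and all vectors ξ, η ∈ H one has Σ_{i∈I} ⟨v_i a w_i ξ, η⟩ = 0 (the sum converging absolutely). Then for every bounded linear functional F on B(H), the sum Σ_{i∈I} F(v_i) w_i converges unconditionally in operator norm and equals 0. -/

import Mathlib

local notation "⟪" x ", " y "⟫" => @inner ℂ _ _ x y

open ContinuousLinearMap in
private lemma col_sq_bound {H : Type*} [NormedAddCommGroup H] [InnerProductSpace ℂ H]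
    [CompleteSpace H] {I : Type*} (u : I → H →L[ℂ] H) (C : ℝ)
    (h : ∀ F : Finset I, ‖∑ i ∈ F, (adjoint (u i)) ∘L (u i)‖ ≤ C)
    (ξ : H) (F : Finset I) : ∑ i ∈ F, ‖u i ξ‖ ^ 2 ≤ C * ‖ξ‖ ^ 2 := by
  have key : (∑ i ∈ F, ‖u i ξ‖ ^ 2 : ℝ)
      = Complex.re ⟪(∑ i ∈ F, (adjoint (u i)) ∘L (u i)) ξ, ξ⟫ := by
    rw [ContinuousLinearMap.sum_apply, sum_inner, Complex.re_sum]
    refine Finset.sum_congr rfl fun i _ => ?_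
    rw [ContinuousLinearMap.comp_apply, ContinuousLinearMap.adjoint_inner_left,
      inner_self_eq_norm_sq_to_K, ← RCLike.ofReal_pow]
    exact (Complex.ofReal_re _).symm
  rw [key]
  calc Complex.re ⟪(∑ i ∈ F, (adjoint (u i)) ∘L (u i)) ξ, ξ⟫
      ≤ ‖⟪(∑ i ∈ F, (adjoint (u i)) ∘L (u i)) ξ, ξ⟫‖ := Complex.re_le_norm _
    _ ≤ ‖(∑ i ∈ F, (adjoint (u i)) ∘L (u i)) ξ‖ * ‖ξ‖ := norm_inner_le_norm _ _
    _ ≤ (‖∑ i ∈ F, (adjoint (u i)) ∘L (u i)‖ * ‖ξ‖) * ‖ξ‖ := by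
        gcongr
        exact (∑ i ∈ F, (adjoint (u i)) ∘L (u i)).le_opNorm ξ
    _ ≤ (C * ‖ξ‖) * ‖ξ‖ := by
        have := h F
        have h0 : (0:ℝ) ≤ ‖ξ‖ := norm_nonneg _
        nlinarith [mul_le_mul_of_nonneg_right (mul_le_mul_of_nonneg_right this h0) h0]
    _ = C * ‖ξ‖ ^ 2 := by ring

open ContinuousLinearMap in
private lemma col_cs {H : Type*} [NormedAddCommGroup H] [InnerProductSpace ℂ H]
    [CompleteSpace H] {I : Type*} (u : I → H →L[ℂ] H) (C : ℝ)
    (h : ∀ F : Finset I, ‖∑ i ∈ F, (adjoint (u i)) ∘L (u i)‖ ≤ C)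
    (c : I → ℂ) (F : Finset I) :
    ‖∑ i ∈ F, c i • u i‖ ≤ Real.sqrt ((∑ i ∈ F, ‖c i‖ ^ 2) * C) := by
  have hC : 0 ≤ C := by simpa using h ∅
  refine opNorm_le_bound _ (Real.sqrt_nonneg _) fun ξ => ?_
  have h1 : ‖(∑ i ∈ F, c i • u i) ξ‖ ≤ ∑ i ∈ F, ‖c i‖ * ‖u i ξ‖ := by
    rw [ContinuousLinearMap.sum_apply]
    refine (norm_sum_le _ _).trans (le_of_eq ?_)
    exact Finset.sum_congr rfl fun i _ => by simp [norm_smul]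
  have h2 : ∑ i ∈ F, ‖c i‖ * ‖u i ξ‖
      ≤ Real.sqrt ((∑ i ∈ F, ‖c i‖ ^ 2) * (∑ i ∈ F, ‖u i ξ‖ ^ 2)) := by
    rw [Real.le_sqrt (Finset.sum_nonneg fun i _ => by positivity)
      (by positivity)]
    exact Finset.sum_mul_sq_le_sq_mul_sq F _ _
  have h3 : Real.sqrt ((∑ i ∈ F, ‖c i‖ ^ 2) * (∑ i ∈ F, ‖u i ξ‖ ^ 2))
      ≤ Real.sqrt ((∑ i ∈ F, ‖c i‖ ^ 2) * (C * ‖ξ‖ ^ 2)) := by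
    apply Real.sqrt_le_sqrt
    have := col_sq_bound u C h ξ F
    have hc : (0:ℝ) ≤ ∑ i ∈ F, ‖c i‖ ^ 2 := Finset.sum_nonneg fun i _ => by positivity
    nlinarith
  have h4 : Real.sqrt ((∑ i ∈ F, ‖c i‖ ^ 2) * (C * ‖ξ‖ ^ 2))
      = Real.sqrt ((∑ i ∈ F, ‖c i‖ ^ 2) * C) * ‖ξ‖ := by
    rw [show (∑ i ∈ F, ‖c i‖ ^ 2) * (C * ‖ξ‖ ^ 2)
        = ((∑ i ∈ F, ‖c i‖ ^ 2) * C) * ‖ξ‖ ^ 2 by ring,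
      Real.sqrt_mul (by positivity), Real.sqrt_sq (norm_nonneg _)]
  linarith

open ContinuousLinearMap in
private lemma row_cs {H : Type*} [NormedAddCommGroup H] [InnerProductSpace ℂ H]
    [CompleteSpace H] {I : Type*} (v : I → H →L[ℂ] H) (C : ℝ)
    (h : ∀ F : Finset I, ‖∑ i ∈ F, (v i) ∘L (adjoint (v i))‖ ≤ C)
    (c : I → ℂ) (F : Finset I) :
    ‖∑ i ∈ F, c i • v i‖ ≤ Real.sqrt ((∑ i ∈ F, ‖c i‖ ^ 2) * C) := by
  have h' : ∀ F : Finset I,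
      ‖∑ i ∈ F, (adjoint (adjoint (v i))) ∘L (adjoint (v i))‖ ≤ C := by
    intro F
    simpa [adjoint_adjoint] using h F
  have key : adjoint (∑ i ∈ F, (starRingEnd ℂ) (c i) • adjoint (v i))
      = ∑ i ∈ F, c i • v i := by
    rw [map_sum]
    refine Finset.sum_congr rfl fun i _ => ?_
    rw [← adjoint_adjoint (c i • v i)]
    congr 1
    rw [map_smulₛₗ]
  calc ‖∑ i ∈ F, c i • v i‖
      = ‖∑ i ∈ F, (starRingEnd ℂ) (c i) • adjoint (v i)‖ := by
        rw [← key, LinearIsometryEquiv.norm_map]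
    _ ≤ Real.sqrt ((∑ i ∈ F, ‖(starRingEnd ℂ) (c i)‖ ^ 2) * C) :=
        col_cs (fun i => adjoint (v i)) C h' _ F
    _ = Real.sqrt ((∑ i ∈ F, ‖c i‖ ^ 2) * C) := by
        simp

private lemma summable_of_l2 {H : Type*} [NormedAddCommGroup H] [InnerProductSpace ℂ H]
    [CompleteSpace H] {I : Type*} (u : I → H →L[ℂ] H) (C : ℝ) (hC : 0 ≤ C)
    (hb : ∀ (c : I → ℂ) (F : Finset I),
      ‖∑ i ∈ F, c i • u i‖ ≤ Real.sqrt ((∑ i ∈ F, ‖c i‖ ^ 2) * C))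
    (c : I → ℂ) (hc : Summable fun i => ‖c i‖ ^ 2) :
    Summable fun i => c i • u i := by
  rw [summable_iff_vanishing_norm]
  intro ε hε
  have hC1 : (0:ℝ) < C + 1 := by linarith
  have hδ : 0 < ε ^ 2 / (C + 1) := by positivity
  obtain ⟨s, hs⟩ := summable_iff_vanishing_norm.1 hc _ hδ
  refine ⟨s, fun t ht => ?_⟩
  have h1 : ∑ i ∈ t, ‖c i‖ ^ 2 < ε ^ 2 / (C + 1) := by
    have h2 := hs t ht
    calc ∑ i ∈ t, ‖c i‖ ^ 2 ≤ ‖∑ i ∈ t, ‖c i‖ ^ 2‖ := le_abs_self _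
      _ < ε ^ 2 / (C + 1) := h2
  have hnn : (0:ℝ) ≤ ∑ i ∈ t, ‖c i‖ ^ 2 :=
    Finset.sum_nonneg fun i _ => sq_nonneg _
  calc ‖∑ i ∈ t, c i • u i‖ ≤ Real.sqrt ((∑ i ∈ t, ‖c i‖ ^ 2) * C) := hb c t
    _ < ε := by
        rw [Real.sqrt_lt' hε]
        have h3 := mul_lt_mul_of_pos_right h1 hC1
        rw [div_mul_cancel₀ _ (ne_of_gt hC1)] at h3
        nlinarith

private lemma quad_bound {s a C : ℝ} (hs : 0 ≤ s) (ha : 0 ≤ a) (hC : 0 ≤ C)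
    (h : s ≤ a * Real.sqrt (s * C)) : s ≤ a ^ 2 * C := by
  have hsq : Real.sqrt (s * C) ^ 2 = s * C := Real.sq_sqrt (mul_nonneg hs hC)
  have key2 : s ^ 2 ≤ a ^ 2 * (s * C) := by
    nlinarith [Real.sqrt_nonneg (s * C)]
  rcases hs.eq_or_lt with h0 | h0
  · rw [← h0]; positivity
  · nlinarith

open ContinuousLinearMap in
private lemma f_l2 {H : Type*} [NormedAddCommGroup H] [InnerProductSpace ℂ H]
    [CompleteSpace H] {I : Type*} (v : I → H →L[ℂ] H) (C : ℝ)
    (h : ∀ F : Finset I, ‖∑ i ∈ F, (v i) ∘L (adjoint (v i))‖ ≤ C)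
    (f : (H →L[ℂ] H) →L[ℂ] ℂ) :
    Summable fun i => ‖f (v i)‖ ^ 2 := by
  have hC : 0 ≤ C := by simpa using h ∅
  apply summable_of_sum_le (fun i => sq_nonneg _)
  intro F
  set s := ∑ i ∈ F, ‖f (v i)‖ ^ 2 with hsdef
  have hs0 : 0 ≤ s := Finset.sum_nonneg fun i _ => sq_nonneg _
  have hz : ∀ z : ℂ, ((‖z‖ : ℂ)) ^ 2 = (starRingEnd ℂ) z * z := by
    intro z
    rw [mul_comm, Complex.mul_conj]
    norm_cast
    simp [Complex.normSq_eq_norm_sq]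
  have heq : (s : ℂ) = f (∑ i ∈ F, (starRingEnd ℂ) (f (v i)) • v i) := by
    rw [map_sum, hsdef]
    push_cast
    refine Finset.sum_congr rfl fun i _ => ?_
    rw [map_smul, smul_eq_mul, hz]
  have key : s ≤ ‖f‖ * Real.sqrt (s * C) := by
    have hs1 : ‖(s : ℂ)‖ = s := by
      rw [Complex.norm_real, Real.norm_eq_abs, abs_of_nonneg hs0]
    calc s = ‖(s : ℂ)‖ := hs1.symm
      _ = ‖f (∑ i ∈ F, (starRingEnd ℂ) (f (v i)) • v i)‖ := by rw [heq]
      _ ≤ ‖f‖ * ‖∑ i ∈ F, (starRingEnd ℂ) (f (v i)) • v i‖ := f.le_opNorm _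
      _ ≤ ‖f‖ * Real.sqrt ((∑ i ∈ F, ‖(starRingEnd ℂ) (f (v i))‖ ^ 2) * C) :=
          mul_le_mul_of_nonneg_left (row_cs v C h _ F) (norm_nonneg f)
      _ = ‖f‖ * Real.sqrt (s * C) := by rw [hsdef]; simp [Complex.norm_conj]
  exact quad_bound hs0 (norm_nonneg f) hC key

/-- Let `(v i)` and `(w i)` be families of bounded operators on a complex
Hilbert space `H` with finite row norm and finite column norm respectively.  If for every
bounded operator `a` and all vectors `ξ, η` the sum `∑ᵢ ⟨vᵢ a wᵢ ξ, η⟩` converges absolutely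
to `0`, then for every bounded linear functional `f` on `B(H)` the sum `∑ᵢ f(vᵢ) wᵢ`
converges unconditionally in operator norm to `0`. -/
theorem slice_sum_zero
    {H : Type*} [NormedAddCommGroup H] [InnerProductSpace ℂ H] [CompleteSpace H]
    {I : Type*} (v w : I → H →L[ℂ] H) (Cv Cw : ℝ)
    (hv : ∀ F : Finset I,
      ‖∑ i ∈ F, (v i) ∘L (ContinuousLinearMap.adjoint (v i))‖ ≤ Cv)
    (hw : ∀ F : Finset I,
      ‖∑ i ∈ F, (ContinuousLinearMap.adjoint (w i)) ∘L (w i)‖ ≤ Cw)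
    (h0 : ∀ (a : H →L[ℂ] H) (ξ η : H),
      Summable (fun i => ‖⟪(v i) (a ((w i) ξ)), η⟫‖) ∧
      HasSum (fun i => ⟪(v i) (a ((w i) ξ)), η⟫) 0)
    (f : (H →L[ℂ] H) →L[ℂ] ℂ) :
    HasSum (fun i => f (v i) • w i) 0 := by
  classical
  have hCv : 0 ≤ Cv := by simpa using hv ∅
  have hCw : 0 ≤ Cw := by simpa using hw ∅
  have key : ∀ ξ η : H, HasSum (fun i => f (v i) * ⟪η, (w i) ξ⟫) 0 := by
    intro ξ η
    set c : I → ℂ := fun i => ⟪η, (w i) ξ⟫ with hc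
    have hc2 : Summable fun i => ‖c i‖ ^ 2 := by
      apply summable_of_sum_le (c := ‖η‖ ^ 2 * (Cw * ‖ξ‖ ^ 2)) (fun i => sq_nonneg _)
      intro F
      calc ∑ i ∈ F, ‖c i‖ ^ 2 ≤ ∑ i ∈ F, ‖η‖ ^ 2 * ‖(w i) ξ‖ ^ 2 := by
            refine Finset.sum_le_sum fun i _ => ?_
            have h5 := norm_inner_le_norm (𝕜 := ℂ) η ((w i) ξ)
            calc ‖c i‖ ^ 2 ≤ (‖η‖ * ‖(w i) ξ‖) ^ 2 :=
                  pow_le_pow_left₀ (norm_nonneg _) h5 2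
              _ = ‖η‖ ^ 2 * ‖(w i) ξ‖ ^ 2 := by ring
        _ = ‖η‖ ^ 2 * ∑ i ∈ F, ‖(w i) ξ‖ ^ 2 := by rw [Finset.mul_sum]
        _ ≤ ‖η‖ ^ 2 * (Cw * ‖ξ‖ ^ 2) := by
            have := col_sq_bound w Cw hw ξ F
            nlinarith [sq_nonneg ‖η‖]
    have hsumv : Summable fun i => c i • v i :=
      summable_of_l2 v Cv hCv (row_cs v Cv hv) c hc2
    obtain ⟨T, hT⟩ := hsumv
    have hT0 : T = 0 := by
      ext ζ
      refine ext_inner_left ℂ fun μ => ?_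
      have h1 : HasSum (fun i => c i * ⟪μ, (v i) ζ⟫) ⟪μ, T ζ⟫ := by
        have h6 := hT.mapL ((innerSL ℂ μ).comp (ContinuousLinearMap.apply ℂ H ζ))
        simpa using h6
      have h2 : HasSum (fun i => c i * ⟪μ, (v i) ζ⟫) 0 := by
        have h3 := (h0 ((innerSL ℂ η).smulRight ζ) ξ μ).2
        have h4 := h3.mapL Complex.conjCLE.toContinuousLinearMap
        simp only [map_zero] at h4
        have heq : (fun i => Complex.conjCLE.toContinuousLinearMap
            ⟪(v i) (((innerSL ℂ η).smulRight ζ) ((w i) ξ)), μ⟫)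
            = fun i => c i * ⟪μ, (v i) ζ⟫ := by
          funext i
          simp [hc, ContinuousLinearMap.smulRight_apply, innerSL_apply_apply,
            inner_smul_right, inner_smul_left, map_smul, inner_conj_symm,
            mul_comm]
        rwa [heq] at h4
      have h7 := h1.unique h2
      simp [h7]
    rw [hT0] at hT
    have hf0 := hT.mapL f
    simp only [map_zero] at hf0
    have heq2 : (fun i => f (c i • v i)) = fun i => f (v i) * ⟪η, (w i) ξ⟫ := by
      funext i
      simp [hc, map_smul, smul_eq_mul, mul_comm]
    rwa [heq2] at hf0
  have hl2 := f_l2 v Cv hv f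
  have hsum : Summable fun i => f (v i) • w i :=
    summable_of_l2 w Cw hCw (col_cs w Cw hw) (fun i => f (v i)) hl2
  obtain ⟨S, hS⟩ := hsum
  have hS0 : S = 0 := by
    ext ξ
    refine ext_inner_left ℂ fun η => ?_
    have h1 : HasSum (fun i => f (v i) * ⟪η, (w i) ξ⟫) ⟪η, S ξ⟫ := by
      simpa using hS.mapL ((innerSL ℂ η).comp (ContinuousLinearMap.apply ℂ H ξ))
    have h2 : HasSum (fun i => f (v i) * ⟪η, (w i) ξ⟫) 0 := key ξ η
    have h7 := h1.unique h2
    simp [h7]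
  rwa [hS0] at hS
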